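/- Let U and V be disjoint finite index sets and let p_i ≥ 0 for all i ∈ U ∪ V, with ∑_{i∈U} p_i^{3/2} > 0. Then ( (∑_{i∈V} p_i^{3/2}) · (∑_{i∈U} p_i²) ) / ( (∑_{i∈U∪V} p_i^{3/2}) · (∑_{i∈U} p_i^{3/2}) ) ≤ (∑_{i∈V} p_i^{3/2})^{1/3} ≤ ∑_{i∈V} p_i^{1/2}. -/

import Mathlib

/-- The residual-regret inequality chain for the 1/2-Tsallis entropy (Section 4). -/
theorem half_tsallis_residual_chain {ι : Type*} [DecidableEq ι]
    (U V : Finset ι) (hUV : Disjoint U V)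
    (p : ι → ℝ) (hp : ∀ i ∈ U ∪ V, 0 ≤ p i)
    (hU : 0 < ∑ i ∈ U, (p i) ^ ((3 : ℝ) / 2)) :
    ((∑ i ∈ V, (p i) ^ ((3 : ℝ) / 2)) * (∑ i ∈ U, (p i) ^ 2)) /
        ((∑ i ∈ U ∪ V, (p i) ^ ((3 : ℝ) / 2)) * (∑ i ∈ U, (p i) ^ ((3 : ℝ) / 2)))
      ≤ (∑ i ∈ V, (p i) ^ ((3 : ℝ) / 2)) ^ ((1 : ℝ) / 3) ∧
    (∑ i ∈ V, (p i) ^ ((3 : ℝ) / 2)) ^ ((1 : ℝ) / 3)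
      ≤ ∑ i ∈ V, (p i) ^ ((1 : ℝ) / 2) := by
  have hpU : ∀ i ∈ U, 0 ≤ p i := fun i hi => hp i (Finset.mem_union_left _ hi)
  have hpV : ∀ i ∈ V, 0 ≤ p i := fun i hi => hp i (Finset.mem_union_right _ hi)
  set A := ∑ i ∈ V, (p i) ^ ((3:ℝ)/2) with hAdef
  set B := ∑ i ∈ U, (p i) ^ ((3:ℝ)/2) with hBdef
  have hA : 0 ≤ A := Finset.sum_nonneg fun i hi => Real.rpow_nonneg (hpV i hi) _
  have hB : 0 < B := hU
  have hsplit : ∑ i ∈ U ∪ V, (p i) ^ ((3:ℝ)/2) = B + A := Finset.sum_union hUV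
  have hC : (∑ i ∈ U, (p i) ^ 2) ≤ B ^ ((4:ℝ)/3) := by
    have h1 : ∀ i ∈ U, (p i) ^ 2 ≤ B ^ ((1:ℝ)/3) * (p i) ^ ((3:ℝ)/2) := by
      intro i hi
      have hx : 0 ≤ p i := hpU i hi
      have hle : (p i) ^ ((3:ℝ)/2) ≤ B :=
        Finset.single_le_sum (fun j hj => Real.rpow_nonneg (hpU j hj) _) hi
      have h2 : (p i) ^ ((1:ℝ)/2) ≤ B ^ ((1:ℝ)/3) := by
        have heq : (p i) ^ ((1:ℝ)/2) = ((p i) ^ ((3:ℝ)/2)) ^ ((1:ℝ)/3) := by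
          rw [← Real.rpow_mul hx]; norm_num
        rw [heq]
        exact Real.rpow_le_rpow (Real.rpow_nonneg hx _) hle (by norm_num)
      have heq2 : (p i) ^ 2 = (p i) ^ ((1:ℝ)/2) * (p i) ^ ((3:ℝ)/2) := by
        rw [← Real.rpow_add' hx (by norm_num : (1:ℝ)/2 + 3/2 ≠ 0)]
        norm_num
      rw [heq2]
      exact mul_le_mul_of_nonneg_right h2 (Real.rpow_nonneg hx _)
    calc (∑ i ∈ U, (p i) ^ 2) ≤ ∑ i ∈ U, B ^ ((1:ℝ)/3) * (p i) ^ ((3:ℝ)/2) :=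
          Finset.sum_le_sum h1
      _ = B ^ ((1:ℝ)/3) * B := by rw [← Finset.mul_sum]
      _ = B ^ ((4:ℝ)/3) := by
          have h := Real.rpow_add hB ((1:ℝ)/3) 1
          rw [Real.rpow_one] at h
          rw [← h]; norm_num
  have hmax : A ^ ((2:ℝ)/3) * B ^ ((1:ℝ)/3) ≤ A + B := by
    rcases le_total A B with h | h
    · calc A ^ ((2:ℝ)/3) * B ^ ((1:ℝ)/3) ≤ B ^ ((2:ℝ)/3) * B ^ ((1:ℝ)/3) :=
            mul_le_mul_of_nonneg_right (Real.rpow_le_rpow hA h (by norm_num))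
              (Real.rpow_nonneg hB.le _)
        _ = B := by rw [← Real.rpow_add hB]; norm_num
        _ ≤ A + B := le_add_of_nonneg_left hA
    · calc A ^ ((2:ℝ)/3) * B ^ ((1:ℝ)/3) ≤ A ^ ((2:ℝ)/3) * A ^ ((1:ℝ)/3) :=
            mul_le_mul_of_nonneg_left (Real.rpow_le_rpow hB.le h (by norm_num))
              (Real.rpow_nonneg hA _)
        _ = A := by
            rw [← Real.rpow_add' hA (by norm_num : (2:ℝ)/3 + 1/3 ≠ 0)]
            norm_num
        _ ≤ A + B := le_add_of_nonneg_right hB.le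
  constructor
  · rw [hsplit]
    have hD : 0 < (B + A) * B := mul_pos (by linarith) hB
    rw [div_le_iff₀ hD]
    calc A * (∑ i ∈ U, (p i) ^ 2) ≤ A * B ^ ((4:ℝ)/3) :=
          mul_le_mul_of_nonneg_left hC hA
      _ = A ^ ((1:ℝ)/3) * ((A ^ ((2:ℝ)/3) * B ^ ((1:ℝ)/3)) * B) := by
          have hBB : B ^ ((1:ℝ)/3) * B = B ^ ((4:ℝ)/3) := by
            have h := Real.rpow_add hB ((1:ℝ)/3) 1
            rw [Real.rpow_one] at h
            rw [← h]; norm_num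
          have hAA : A ^ ((1:ℝ)/3) * A ^ ((2:ℝ)/3) = A := by
            rw [← Real.rpow_add' hA (by norm_num : (1:ℝ)/3 + 2/3 ≠ 0)]
            norm_num
          rw [show A ^ ((1:ℝ)/3) * ((A ^ ((2:ℝ)/3) * B ^ ((1:ℝ)/3)) * B)
              = (A ^ ((1:ℝ)/3) * A ^ ((2:ℝ)/3)) * (B ^ ((1:ℝ)/3) * B) by ring,
            hAA, hBB]
      _ ≤ A ^ ((1:ℝ)/3) * ((B + A) * B) := by
          apply mul_le_mul_of_nonneg_left _ (Real.rpow_nonneg hA _)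
          apply mul_le_mul_of_nonneg_right _ hB.le
          linarith [hmax]
  · set S := ∑ i ∈ V, (p i) ^ ((1:ℝ)/2) with hSdef
    have hS : 0 ≤ S := Finset.sum_nonneg fun i hi => Real.rpow_nonneg (hpV i hi) _
    have hA3 : A ≤ S ^ 3 := by
      have h1 : ∀ i ∈ V, (p i) ^ ((3:ℝ)/2) ≤ S ^ 2 * (p i) ^ ((1:ℝ)/2) := by
        intro i hi
        have hx : 0 ≤ p i := hpV i hi
        have hy : 0 ≤ (p i) ^ ((1:ℝ)/2) := Real.rpow_nonneg hx _
        have hle : (p i) ^ ((1:ℝ)/2) ≤ S :=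
          Finset.single_le_sum (fun j hj => Real.rpow_nonneg (hpV j hj) _) hi
        have hpone : ((p i) ^ ((1:ℝ)/2)) ^ 2 = p i := by
          rw [← Real.rpow_natCast ((p i) ^ ((1:ℝ)/2)) 2, ← Real.rpow_mul hx]
          norm_num
        have hadd := Real.rpow_add' hx (show (1:ℝ) + 1/2 ≠ 0 by norm_num)
        rw [Real.rpow_one] at hadd
        have heq : (p i) ^ ((3:ℝ)/2) = ((p i) ^ ((1:ℝ)/2)) ^ 2 * (p i) ^ ((1:ℝ)/2) := by
          rw [hpone, show (3:ℝ)/2 = 1 + 1/2 by norm_num, hadd]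
        rw [heq]
        exact mul_le_mul_of_nonneg_right (pow_le_pow_left₀ hy hle 2) hy
      calc A ≤ ∑ i ∈ V, S ^ 2 * (p i) ^ ((1:ℝ)/2) := Finset.sum_le_sum h1
        _ = S ^ 2 * S := by rw [← Finset.mul_sum]
        _ = S ^ 3 := by ring
    calc A ^ ((1:ℝ)/3) ≤ (S ^ 3) ^ ((1:ℝ)/3) :=
          Real.rpow_le_rpow hA hA3 (by norm_num)
      _ = S := by
          rw [← Real.rpow_natCast S 3, ← Real.rpow_mul hS]
          norm_num
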